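/- If $(q,q)\in\mathcal{J}$ and $b_{q,q}(u)>0$, then the distribution of the diagonal matricially free Gaussian operator $\omega_{q,q}(u)$ in the state $\Psi_{q}$ is the semicircle law of radius $2\sqrt{b_{q,q}(u)}$; that is, $\Psi_q(\omega_{q,q}(u)^{2m}) = C_m\, b_{q,q}(u)^m$ where $C_m$ is the $m$-th Catalan number, and odd moments vanish. If $p\neq q$, the distribution of $\omega_{p,q}(u)$ in $\Psi_q$ is the Bernoulli law at $\pm\sqrt{b_{p,q}(u)}$: $\Psi_q(\omega_{p,q}(u)^{2m})=b_{p,q}(u)^m$. -/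

import Mathlib

open ContinuousLinearMap

/-- Basis-index test for nontrivial action of `℘_{p,q}(u)` (see statement 0). -/
def actsOn {r t : ℕ} (q : Fin r) (x : Fin r × List (Fin r × Fin t)) : Bool :=
  match x.2 with
  | [] => x.1 == q
  | (a, _) :: _ => a == q

/-- Counts of nonnegative ±1 lattice paths from `0` to `k` of length `n`. -/
def Pth : ℕ → ℕ → ℕ
  | 0, 0 => 1
  | 0, _+1 => 0
  | n+1, 0 => Pth n 1
  | n+1, k+1 => Pth n k + Pth n (k+2)

lemma Pth_succ_zero (n : ℕ) : Pth (n+1) 0 = Pth n 1 := rfl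
lemma Pth_succ_succ (n k : ℕ) : Pth (n+1) (k+1) = Pth n k + Pth n (k+2) := rfl

lemma Pth_zero_of_lt : ∀ n k, n < k → Pth n k = 0 := by
  intro n
  induction n with
  | zero => intro k h; match k, h with | (k+1), _ => rfl
  | succ n ih =>
    intro k h
    match k, h with
    | (k+1), h =>
      show Pth n k + Pth n (k+2) = 0
      rcases Nat.lt_or_ge k (n+1) with h' | h'
      · omega
      · rw [ih k (by omega), ih (k+2) (by omega)]

lemma Pth_parity : ∀ n k, Odd (n + k) → Pth n k = 0 := by
  intro n
  induction n with
  | zero => intro k h; match k with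
            | 0 => simp at h
            | k+1 => rfl
  | succ n ih =>
    intro k h
    match k with
    | 0 =>
      show Pth n 1 = 0
      rcases h with ⟨j, hj⟩
      exact ih 1 ⟨j, by omega⟩
    | k+1 =>
      show Pth n k + Pth n (k+2) = 0
      rcases h with ⟨j, hj⟩
      rw [ih k ⟨j-1, by omega⟩, ih (k+2) ⟨j, by omega⟩]

lemma Pth_choose : ∀ n k j, n + k = 2 * j →
    (Pth n k : ℤ) = (n.choose j : ℤ) - n.choose (j+1) := by
  intro n
  induction n with
  | zero =>
    intro k j h
    match k with
    | 0 =>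
      have : j = 0 := by omega
      subst this; simp [Pth]
    | k+1 =>
      have hj : 1 ≤ j := by omega
      show ((0:ℕ) : ℤ) = _
      rw [Nat.choose_eq_zero_of_lt (by omega), Nat.choose_eq_zero_of_lt (by omega)]
      simp
  | succ n ih =>
    intro k j h
    match k with
    | 0 =>
      have hj : 1 ≤ j := by omega
      obtain ⟨j', rfl⟩ : ∃ j', j = j' + 1 := ⟨j - 1, by omega⟩
      have hn : n = 2 * j' + 1 := by omega
      show (Pth n 1 : ℤ) = _
      rw [ih 1 (j'+1) (by omega)]
      have h1 : (n+1).choose (j'+1) = n.choose (j'+1) + n.choose j' := by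
        rw [Nat.choose_succ_succ']; ring
      have h2 : (n+1).choose (j'+1+1) = n.choose (j'+1+1) + n.choose (j'+1) := by
        rw [Nat.choose_succ_succ']; ring
      have h3 : n.choose j' = n.choose (j'+1) := by
        rw [hn]; exact (Nat.choose_symm_half j').symm
      push_cast [h1, h2, h3]
      ring
    | k+1 =>
      have hj : 1 ≤ j := by omega
      obtain ⟨j', rfl⟩ : ∃ j', j = j' + 1 := ⟨j - 1, by omega⟩
      show ((Pth n k + Pth n (k+2) : ℕ) : ℤ) = _
      push_cast
      rw [ih k j' (by omega), ih (k+2) (j'+1) (by omega)]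
      have h1 : (n+1).choose (j'+1) = n.choose (j'+1) + n.choose j' := by
        rw [Nat.choose_succ_succ']; ring
      have h2 : (n+1).choose (j'+1+1) = n.choose (j'+1+1) + n.choose (j'+1) := by
        rw [Nat.choose_succ_succ']; ring
      push_cast [h1, h2]
      ring

lemma Pth_catalan (m : ℕ) : Pth (2*m) 0 = catalan m := by
  have h := Pth_choose (2*m) 0 m (by omega)
  have hc : (m+1) * catalan m = (2*m).choose m := by
    rw [succ_mul_catalan_eq_centralBinom, Nat.centralBinom]
  have hid : (2*m).choose (m+1) * (m+1) = (2*m).choose m * m := by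
    have := Nat.choose_succ_right_eq (2*m) m
    simpa [Nat.two_mul] using this
  have key : ((m:ℤ)+1) * (Pth (2*m) 0 : ℤ) = ((m:ℤ)+1) * catalan m := by
    rw [h]
    have hid' : ((2*m).choose (m+1) : ℤ) * (m+1) = ((2*m).choose m : ℤ) * m := by
      exact_mod_cast congrArg (Nat.cast : ℕ → ℤ) hid
    have hc' : ((m:ℤ)+1) * catalan m = ((2*m).choose m : ℤ) := by
      exact_mod_cast congrArg (Nat.cast : ℕ → ℤ) hc
    nlinarith [hid', hc']
  have : (Pth (2*m) 0 : ℤ) = catalan m := by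
    have hne : ((m:ℤ)+1) ≠ 0 := by positivity
    exact mul_left_cancel₀ hne key
  exact_mod_cast this

section Hilbert

variable {H : Type} [NormedAddCommGroup H] [InnerProductSpace ℂ H] [CompleteSpace H]

omit [CompleteSpace H] in
lemma chain_pow (ω : H →L[ℂ] H) (s : ℂ) (v : ℕ → H)
    (h0 : ω (v 0) = s • v 1)
    (hs : ∀ k, ω (v (k+1)) = s • v (k+2) + s • v k) :
    ∀ n, (ω^n) (v 0) = ∑ k ∈ Finset.range (n+1), (s^n * (Pth n k : ℂ)) • v k := by
  intro n
  induction n with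
  | zero => simp [Pth]
  | succ n ih =>
    have hpow : (ω^(n+1)) (v 0) = ω ((ω^n) (v 0)) := by
      rw [pow_succ']; rfl
    rw [hpow, ih, map_sum]
    have hterm : ∀ k ∈ Finset.range (n+1), ω ((s^n * (Pth n k : ℂ)) • v k)
        = (s^n * (Pth n k : ℂ)) • ω (v k) := fun k _ => map_smul ω _ _
    rw [Finset.sum_congr rfl hterm]
    rw [Finset.sum_range_succ' (fun k => (s^n * (Pth n k : ℂ)) • ω (v k)) n]
    simp only [hs, h0, smul_add]
    rw [Finset.sum_add_distrib]
    rw [Finset.sum_range_succ' (fun k => (s^(n+1) * (Pth (n+1) k : ℂ)) • v k) (n+1)]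
    simp only [Pth_succ_succ, Pth_succ_zero, Nat.cast_add]
    have hsplit : ∀ i ∈ Finset.range (n+1),
        (s^(n+1) * ((Pth n i : ℂ) + (Pth n (i+2) : ℂ))) • v (i+1)
        = (s^(n+1) * (Pth n i : ℂ)) • v (i+1) + (s^(n+1) * (Pth n (i+2) : ℂ)) • v (i+1) := by
      intro i _
      rw [mul_add, add_smul]
    rw [Finset.sum_congr rfl hsplit, Finset.sum_add_distrib]
    have eqA : (∑ i ∈ Finset.range (n+1), (s^(n+1) * (Pth n i : ℂ)) • v (i+1))
        = (∑ i ∈ Finset.range n, (s^n * (Pth n (i+1) : ℂ)) • (s • v (i+2)))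
          + (s^n * (Pth n 0 : ℂ)) • (s • v 1) := by
      rw [Finset.sum_range_succ' (fun i => (s^(n+1) * (Pth n i : ℂ)) • v (i+1)) n]
      congr 1
      · exact Finset.sum_congr rfl fun i _ => by rw [smul_smul]; ring_nf
      · rw [smul_smul]; ring_nf
    have eqB : (∑ i ∈ Finset.range (n+1), (s^(n+1) * (Pth n (i+2) : ℂ)) • v (i+1))
          + (s^(n+1) * (Pth n 1 : ℂ)) • v 0
        = ∑ i ∈ Finset.range n, (s^n * (Pth n (i+1) : ℂ)) • (s • v i) := by
      have hzero : (s^(n+1) * (Pth n (n+2) : ℂ)) • v (n+1) = 0 := by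
        rw [Pth_zero_of_lt n (n+2) (by omega)]; simp
      rw [Finset.sum_range_succ (fun i => (s^(n+1) * (Pth n (i+2) : ℂ)) • v (i+1)) n]
      have key : ∑ i ∈ Finset.range (n+1), (s^(n+1) * (Pth n (i+1) : ℂ)) • v i
          = (∑ i ∈ Finset.range n, (s^(n+1) * (Pth n (i+2) : ℂ)) • v (i+1))
            + (s^(n+1) * (Pth n 1 : ℂ)) • v 0 :=
        Finset.sum_range_succ' (fun i => (s^(n+1) * (Pth n (i+1) : ℂ)) • v i) n
      have key2 : ∑ i ∈ Finset.range (n+1), (s^(n+1) * (Pth n (i+1) : ℂ)) • v i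
          = ∑ i ∈ Finset.range n, (s^(n+1) * (Pth n (i+1) : ℂ)) • v i := by
        rw [Finset.sum_range_succ]
        rw [Pth_zero_of_lt n (n+1) (by omega)]
        simp
      rw [hzero, add_zero, ← key, key2]
      exact Finset.sum_congr rfl fun i _ => by rw [smul_smul]; ring_nf
    rw [eqA, ← eqB]
    abel

omit [CompleteSpace H] in
lemma dense_inner_eq {ι : Type} (e : ι → H)
    (hdense : (Submodule.span ℂ (Set.range e)).topologicalClosure = ⊤)
    (a b : H) (hw : ∀ x, (inner ℂ a (e x) : ℂ) = inner ℂ b (e x)) : a = b := by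
  have h0 : ∀ x, (inner ℂ (a - b) (e x) : ℂ) = 0 := by
    intro x; rw [inner_sub_left, hw x, sub_self]
  have hker : Set.range e ⊆ (((innerSL ℂ (a - b)).ker : Submodule ℂ H) : Set H) := by
    rintro _ ⟨x, rfl⟩
    exact LinearMap.mem_ker.mpr (by rw [ContinuousLinearMap.coe_coe, innerSL_apply_apply]; exact h0 x)
  have hspan := Submodule.span_le.mpr hker
  have hclosed : IsClosed (((innerSL ℂ (a - b)).ker : Submodule ℂ H) : Set H) :=
    ContinuousLinearMap.isClosed_ker _
  have hle := Submodule.topologicalClosure_minimal hspan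
    (s := Submodule.span ℂ (Set.range e)) hclosed
  rw [hdense] at hle
  have hmem : a - b ∈ (innerSL ℂ (a - b)).ker := hle Submodule.mem_top
  have : (inner ℂ (a - b) (a - b) : ℂ) = 0 := by
    have h2 := LinearMap.mem_ker.mp hmem
    rw [ContinuousLinearMap.coe_coe, innerSL_apply_apply] at h2
    exact h2
  rw [inner_self_eq_zero, sub_eq_zero] at this
  exact this

omit [CompleteSpace H] in
lemma inner_chain_sum (v : ℕ → H) (hv : Orthonormal ℂ v) (n : ℕ) (s : ℂ) :
    (inner ℂ (v 0) (∑ k ∈ Finset.range (n+1), (s^n * (Pth n k : ℂ)) • v k) : ℂ)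
      = s^n * (Pth n 0 : ℂ) := by
  rw [inner_sum]
  have hterm : ∀ k ∈ Finset.range (n+1),
      (inner ℂ (v 0) ((s^n * (Pth n k : ℂ)) • v k) : ℂ)
      = if 0 = k then s^n * (Pth n k : ℂ) else 0 := by
    intro k _
    rw [inner_smul_right, orthonormal_iff_ite.mp hv]
    split <;> simp
  rw [Finset.sum_congr rfl hterm, Finset.sum_ite_eq]
  simp

end Hilbert

/-- If `b_{q,q}(u) > 0`, the distribution of the diagonal matricially free
Gaussian operator `ω_{q,q}(u)` in the state `Ψ_q` is the semicircle law of radius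
`2√(b_{q,q}(u))`: `Ψ_q(ω_{q,q}(u)^{2m}) = C_m b_{q,q}(u)^m` (Catalan numbers) and odd
moments vanish.  For `p ≠ q`, the distribution of `ω_{p,q}(u)` in `Ψ_q` is the Bernoulli
law at `±√(b_{p,q}(u))`: `Ψ_q(ω_{p,q}(u)^{2m}) = b_{p,q}(u)^m`. -/
theorem stmt9 {H : Type} [NormedAddCommGroup H] [InnerProductSpace ℂ H] [CompleteSpace H]
    (r t : ℕ) (b : Fin r → Fin r → Fin t → ℝ) (hb : ∀ p q u, 0 ≤ b p q u)
    (e : Fin r × List (Fin r × Fin t) → H) (he : Orthonormal ℂ e)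
    (hdense : (Submodule.span ℂ (Set.range e)).topologicalClosure = ⊤)
    (c : Fin r → Fin r → Fin t → H →L[ℂ] H)
    (hc : ∀ p q u x, c p q u (e x) =
      if actsOn q x then (Real.sqrt (b p q u) : ℂ) • e (x.1, (p, u) :: x.2) else 0)
    (om : Fin r → Fin r → Fin t → H →L[ℂ] H)
    (hom : ∀ i j u, om i j u = c i j u + adjoint (c i j u))
    (q : Fin r) (u : Fin t) (hbq : 0 < b q q u) :
    (∀ m : ℕ,
      (@inner ℂ H _ (e (q, ([] : List (Fin r × Fin t)))) (((om q q u) ^ (2 * m)) (e (q, [])))) =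
        (((catalan m : ℝ) * (b q q u) ^ m : ℝ) : ℂ)) ∧
    (∀ m : ℕ, Odd m →
      (@inner ℂ H _ (e (q, ([] : List (Fin r × Fin t)))) (((om q q u) ^ m) (e (q, [])))) = 0) ∧
    (∀ p : Fin r, p ≠ q → ∀ m : ℕ,
      (@inner ℂ H _ (e (q, ([] : List (Fin r × Fin t)))) (((om p q u) ^ (2 * m)) (e (q, [])))) =
        (((b p q u) ^ m : ℝ) : ℂ)) := by
  have hee : ∀ x y, (inner ℂ (e x) (e y) : ℂ) = if x = y then 1 else 0 :=
    orthonormal_iff_ite.mp he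
  have hadj : ∀ (p : Fin r) (w tgt : H),
      (∀ x, (inner ℂ w (c p q u (e x)) : ℂ) = inner ℂ tgt (e x)) →
      ContinuousLinearMap.adjoint (c p q u) w = tgt := by
    intro p w tgt h
    apply dense_inner_eq e hdense
    intro x
    rw [ContinuousLinearMap.adjoint_inner_left, h x]
  -- endpoint annihilation: adjoint kills the vacuum vector
  have hA0 : ∀ p : Fin r, ContinuousLinearMap.adjoint (c p q u) (e (q, [])) = 0 := by
    intro p
    apply hadj
    intro x
    rw [hc, inner_zero_left]
    split
    · rw [inner_smul_right, hee]
      have : ((q, ([] : List (Fin r × Fin t))) : Fin r × List (Fin r × Fin t))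
          ≠ (x.1, (p, u) :: x.2) := by
        intro hcontra
        simp at hcontra
      rw [if_neg this]
      ring
    · rw [inner_zero_right]
  -- === diagonal case ===
  set s : ℝ := Real.sqrt (b q q u) with hs_def
  have hs2 : (s : ℝ)^2 = b q q u := Real.sq_sqrt (hb q q u)
  set v : ℕ → H := fun k => e (q, List.replicate k (q, u)) with hv_def
  have hg : Function.Injective (fun k : ℕ => ((q, List.replicate k ((q : Fin r), u)) :
      Fin r × List (Fin r × Fin t))) := by
    intro a a' h
    have := congrArg (fun z : Fin r × List (Fin r × Fin t) => z.2.length) h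
    simpa using this
  have hv : Orthonormal ℂ v := he.comp _ hg
  have hacts : ∀ k : ℕ, actsOn q ((q, List.replicate k ((q : Fin r), u))) = true := by
    intro k
    cases k with
    | zero => simp [actsOn]
    | succ k => simp [actsOn, List.replicate_succ]
  have hCv : ∀ k, c q q u (v k) = (s : ℂ) • v (k+1) := by
    intro k
    show c q q u (e (q, List.replicate k (q, u))) = _
    rw [hc, if_pos (hacts k)]
    rfl
  have hAv : ∀ k, ContinuousLinearMap.adjoint (c q q u) (v (k+1)) = (s : ℂ) • v k := by
    intro k
    apply hadj
    intro x
    rw [hc, inner_smul_left]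
    by_cases hx : x = ((q, List.replicate k ((q : Fin r), u)))
    · subst hx
      rw [if_pos (hacts k), inner_smul_right, hee, hee]
      rw [if_pos rfl]
      have : ((q, List.replicate (k+1) ((q : Fin r), u)) : Fin r × List (Fin r × Fin t))
          = (q, (q, u) :: List.replicate k ((q : Fin r), u)) := by
        rw [List.replicate_succ]
      rw [if_pos this]
      simp [Complex.conj_ofReal, hs_def]
    · have hne2 : ((q, List.replicate k ((q : Fin r), u)) : Fin r × List (Fin r × Fin t)) ≠ x :=
        fun h => hx h.symm
      rw [hee, if_neg hne2, mul_zero]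
      split
      · rw [inner_smul_right, hee]
        have : ((q, List.replicate (k+1) ((q : Fin r), u)) : Fin r × List (Fin r × Fin t))
            ≠ (x.1, (q, u) :: x.2) := by
          intro hcontra
          apply hx
          rw [Prod.mk.injEq, List.replicate_succ, List.cons.injEq] at hcontra
          obtain ⟨x1, x2⟩ := x
          exact Prod.ext_iff.mpr ⟨hcontra.1.symm, hcontra.2.2.symm⟩
        rw [if_neg this, mul_zero]
      · rw [inner_zero_right]
  have homega : ∀ k, om q q u (v (k+1)) = (s : ℂ) • v (k+2) + (s : ℂ) • v k := by
    intro k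
    rw [hom]
    simp only [ContinuousLinearMap.add_apply]
    rw [hCv, hAv]
  have homega0 : om q q u (v 0) = (s : ℂ) • v 1 := by
    rw [hom]
    simp only [ContinuousLinearMap.add_apply]
    rw [hCv 0]
    have := hA0 q
    rw [show (e (q, ([] : List (Fin r × Fin t)))) = v 0 from rfl] at this
    rw [this, add_zero]
  have hmom : ∀ n : ℕ, (inner ℂ (v 0) ((om q q u ^ n) (v 0)) : ℂ)
      = (s : ℂ)^n * (Pth n 0 : ℂ) := by
    intro n
    rw [chain_pow (om q q u) (s : ℂ) v homega0 homega n]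
    exact inner_chain_sum v hv n (s : ℂ)
  have hv00 : (e (q, ([] : List (Fin r × Fin t)))) = v 0 := rfl
  refine ⟨?_, ?_, ?_⟩
  · -- even moments: Catalan
    intro m
    rw [hv00, hmom (2*m), Pth_catalan]
    have : ((s : ℂ))^(2*m) = (((b q q u)^m : ℝ) : ℂ) := by
      rw [pow_mul]
      norm_cast
      rw [hs2]
    rw [this]
    push_cast
    ring
  · -- odd moments vanish
    intro m hm
    rw [hv00, hmom m, Pth_parity m 0 (by simpa using hm)]
    simp
  · -- Bernoulli case
    intro p hp m
    set sp : ℝ := Real.sqrt (b p q u) with hsp_def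
    have hsp2 : (sp : ℝ)^2 = b p q u := Real.sq_sqrt (hb p q u)
    set w0 : H := e (q, ([] : List (Fin r × Fin t))) with hw0_def
    set w1 : H := e (q, [((p : Fin r), u)]) with hw1_def
    have hC0 : c p q u w0 = (sp : ℂ) • w1 := by
      rw [hw0_def, hc]
      rw [if_pos (by simp [actsOn])]
    have hC1 : c p q u w1 = 0 := by
      rw [hw1_def, hc]
      rw [if_neg (by simp [actsOn]; exact hp)]
    have hA1 : ContinuousLinearMap.adjoint (c p q u) w1 = (sp : ℂ) • w0 := by
      apply hadj
      intro x
      rw [hc, inner_smul_left]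
      by_cases hx : x = ((q, ([] : List (Fin r × Fin t))))
      · subst hx
        rw [if_pos (by simp [actsOn]), inner_smul_right, hee, hee]
        rw [if_pos rfl, if_pos rfl]
        simp [Complex.conj_ofReal, hsp_def]
      · have hne2 : ((q, ([] : List (Fin r × Fin t))) : Fin r × List (Fin r × Fin t)) ≠ x :=
          fun h => hx h.symm
        rw [hee, if_neg hne2, mul_zero]
        split
        · rw [inner_smul_right, hee]
          have : ((q, [((p : Fin r), u)]) : Fin r × List (Fin r × Fin t))
              ≠ (x.1, (p, u) :: x.2) := by
            intro hcontra
            apply hx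
            have h1 : x.1 = q := (congrArg Prod.fst hcontra).symm
            have h2 : x.2 = [] := by
              have := congrArg Prod.snd hcontra
              exact (List.cons_injective this).symm
            cases x with
            | mk x1 x2 => simp at h1 h2 ⊢; exact ⟨h1, h2⟩
          rw [if_neg this, mul_zero]
        · rw [inner_zero_right]
    have hom0 : om p q u w0 = (sp : ℂ) • w1 := by
      rw [hom]
      simp only [ContinuousLinearMap.add_apply]
      rw [hC0, hA0 p]
      simp [hw0_def]
    have hom1 : om p q u w1 = (sp : ℂ) • w0 := by
      rw [hom]
      simp only [ContinuousLinearMap.add_apply]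
      rw [hC1, hA1]
      simp
    have hpow : ∀ m : ℕ, (om p q u ^ (2*m)) w0 = (((sp : ℂ))^2)^m • w0 := by
      intro m
      induction m with
      | zero => simp
      | succ m ih =>
        have h2 : 2 * (m+1) = 2*m + 2 := by ring
        rw [h2, pow_add]
        have hsq : (om p q u ^ 2) w0 = ((sp : ℂ))^2 • w0 := by
          rw [sq, ContinuousLinearMap.mul_apply, hom0, map_smul, hom1, smul_smul, sq]
        rw [ContinuousLinearMap.mul_apply, hsq, map_smul, ih, smul_smul]
        rw [pow_succ]
        ring_nf
    rw [hpow m, inner_smul_right]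
    have : (inner ℂ w0 w0 : ℂ) = 1 := by rw [hw0_def, hee, if_pos rfl]
    rw [this, mul_one]
    norm_cast
    rw [hsp2]
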